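/- arXiv:0706.2790 — 3 statements merged into one kernel-verified Lean document; each statement's English description precedes it below -/
import Mathlib

section
/- Let Y be a nonempty subset of a metric space X, V a set, and f : Y → L^∞(V) a Lipschitz map (where L^∞(V) is the space of bounded real-valued functions on V with the sup norm). Define F : X → L^∞(V) by F_x(v) = inf_{y ∈ Y} (f_y(v) + dil(f,y)·d(x,y)), where dil(f,y) = sup_{y'≠y} d(f(y),f(y'))/d(y,y'). Then F is well-defined (F_x is a bounded function for each x) and F restricted to Y equals f. -/
open scoped ENNReal NNReal

/-- The pointwise dilatation `dil(g, a) = sup_{a' ≠ a} d(g a, g a') / d(a, a')`. -/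
noncomputable def ptDil {A E : Type*} [MetricSpace A] [MetricSpace E]
    (g : A → E) (a : A) : ℝ :=
  sSup {r : ℝ | ∃ a' : A, a' ≠ a ∧ r = dist (g a) (g a') / dist a a'}

/-- For a Lipschitz map `f : Y → L^∞(V)` on a nonempty subset `Y` of a metric space `X`,
the formula `F_x(v) = inf_{y ∈ Y} (f_y(v) + dil(f,y)·d(x,y))` defines a bounded function of
`v` for every `x ∈ X` (well-definedness), and `F` restricted to `Y` equals `f`. -/
theorem stmt_0 {X V : Type*} [MetricSpace X] (Y : Set X) (hY : Y.Nonempty)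
    (f : Y → lp (fun _ : V => ℝ) ∞) (L : ℝ≥0) (hf : LipschitzWith L f) :
    (∀ x : X, Memℓp (fun v : V =>
        ⨅ y : Y, ((f y : ∀ _ : V, ℝ) v + ptDil f y * dist x (y : X))) ∞) ∧
    (∀ y : Y, (fun v : V =>
        ⨅ y' : Y, ((f y' : ∀ _ : V, ℝ) v + ptDil f y' * dist (y : X) (y' : X)))
      = ((f y : ∀ _ : V, ℝ))) := by
  have hL : (0:ℝ) ≤ L := L.coe_nonneg
  have hmem : ∀ (y : Y) (r : ℝ),
      r ∈ {r : ℝ | ∃ a' : Y, a' ≠ y ∧ r = dist (f y) (f a') / dist y a'} → r ≤ L := by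
    rintro y r ⟨y', hne, rfl⟩
    have hpos : (0:ℝ) < dist y y' := dist_pos.mpr (Ne.symm hne)
    rw [div_le_iff₀ hpos]
    exact hf.dist_le_mul y y'
  have hdil_le : ∀ y : Y, ptDil f y ≤ L := fun y => Real.sSup_le (hmem y) hL
  have hdil_nonneg : ∀ y : Y, 0 ≤ ptDil f y := by
    intro y
    apply Real.sSup_nonneg
    rintro r ⟨y', hne, rfl⟩
    positivity
  have hdist_le : ∀ y y' : Y, dist (f y) (f y') ≤ ptDil f y * dist (y : X) (y' : X) := by
    intro y y'
    rcases eq_or_ne y' y with rfl | hne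
    · simp
    · have hpos : (0:ℝ) < dist y y' := dist_pos.mpr (Ne.symm hne)
      have h1 : dist (f y) (f y') / dist y y' ≤ ptDil f y :=
        le_csSup ⟨L, hmem y⟩ ⟨y', hne, rfl⟩
      have := (div_le_iff₀ hpos).mp h1
      rwa [Subtype.dist_eq] at this
  have hcoord : ∀ (g : lp (fun _ : V => ℝ) ∞) (v : V), |g v| ≤ ‖g‖ := fun g v =>
    lp.norm_apply_le_norm ENNReal.top_ne_zero g v
  have hcoord2 : ∀ (g h : lp (fun _ : V => ℝ) ∞) (v : V),
      |(g : ∀ _ : V, ℝ) v - h v| ≤ dist g h := by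
    intro g h v
    have h1 := lp.norm_apply_le_norm ENNReal.top_ne_zero (g - h) v
    have h2 : ((g - h : lp (fun _ : V => ℝ) ∞) : ∀ _ : V, ℝ) v = g v - h v := by
      rw [lp.coeFn_sub]; rfl
    rw [dist_eq_norm]
    calc |(g : ∀ _ : V, ℝ) v - h v| = ‖((g - h : lp (fun _ : V => ℝ) ∞) : ∀ _ : V, ℝ) v‖ := by
          rw [h2, Real.norm_eq_abs]
      _ ≤ ‖g - h‖ := h1
  obtain ⟨y0x, hy0⟩ := hY
  set y0 : Y := ⟨y0x, hy0⟩ with hy0def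
  haveI : Nonempty Y := ⟨y0⟩
  -- uniform lower bound
  have hlow : ∀ (x : X) (v : V) (y : Y),
      (f y0 : ∀ _ : V, ℝ) v - L * dist x (y0 : X)
        ≤ (f y : ∀ _ : V, ℝ) v + ptDil f y * dist x (y : X) := by
    intro x v y
    have h1 : (f y0 : ∀ _ : V, ℝ) v - (f y : ∀ _ : V, ℝ) v ≤ dist (f y) (f y0) := by
      have := hcoord2 (f y0) (f y) v
      rw [abs_sub_le_iff] at this
      exact this.1.trans_eq (dist_comm _ _)
    have h2 : dist (f y) (f y0) ≤ ptDil f y * dist (y : X) (y0 : X) := hdist_le y y0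
    have h3 : ptDil f y * dist (y : X) (y0 : X)
        ≤ ptDil f y * (dist x (y : X) + dist x (y0 : X)) := by
      apply mul_le_mul_of_nonneg_left _ (hdil_nonneg y)
      exact (dist_triangle_left _ _ x)
    have h4 : ptDil f y * dist x (y0 : X) ≤ L * dist x (y0 : X) :=
      mul_le_mul_of_nonneg_right (hdil_le y) dist_nonneg
    nlinarith [hdil_nonneg y, dist_nonneg (x := x) (y := (y : X))]
  have hbdd : ∀ (x : X) (v : V), BddBelow (Set.range fun y : Y =>
      (f y : ∀ _ : V, ℝ) v + ptDil f y * dist x (y : X)) := by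
    intro x v
    exact ⟨(f y0 : ∀ _ : V, ℝ) v - L * dist x (y0 : X), by
      rintro r ⟨y, rfl⟩; exact hlow x v y⟩
  constructor
  · intro x
    apply memℓp_infty
    refine ⟨‖f y0‖ + L * dist x (y0 : X), ?_⟩
    rintro r ⟨v, rfl⟩
    show ‖⨅ y : Y, ((f y : ∀ _ : V, ℝ) v + ptDil f y * dist x (y : X))‖ ≤ _
    rw [Real.norm_eq_abs, abs_le]
    constructor
    · have := le_ciInf (fun y : Y => hlow x v y)
      have h0 : -(‖f y0‖ + L * dist x (y0 : X))
          ≤ (f y0 : ∀ _ : V, ℝ) v - L * dist x (y0 : X) := by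
        have := (abs_le.mp (hcoord (f y0) v)).1
        linarith
      exact h0.trans this
    · have h1 : (⨅ y : Y, ((f y : ∀ _ : V, ℝ) v + ptDil f y * dist x (y : X)))
          ≤ (f y0 : ∀ _ : V, ℝ) v + ptDil f y0 * dist x (y0 : X) :=
        ciInf_le (hbdd x v) y0
      have h2 : ptDil f y0 * dist x (y0 : X) ≤ L * dist x (y0 : X) :=
        mul_le_mul_of_nonneg_right (hdil_le y0) dist_nonneg
      have := (abs_le.mp (hcoord (f y0) v)).2
      linarith
  · intro y
    funext v
    apply le_antisymm
    · have := ciInf_le (hbdd (y : X) v) y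
      simpa using this
    · apply le_ciInf
      intro y'
      have h1 : (f y : ∀ _ : V, ℝ) v - (f y' : ∀ _ : V, ℝ) v ≤ dist (f y') (f y) := by
        have := hcoord2 (f y) (f y') v
        rw [abs_sub_le_iff] at this
        exact this.1.trans_eq (dist_comm _ _)
      have h2 : dist (f y') (f y) ≤ ptDil f y' * dist (y' : X) (y : X) := hdist_le y' y
      rw [dist_comm (y' : X) (y : X)] at h2
      linarith
end

section
/- Let Y be a nonempty subset of a metric space X and f : Y → L^∞(V) Lipschitz. For the extension F_x(v) = inf_{y ∈ Y}(f_y(v) + dil(f,y)·d(x,y)), the pointwise dilatation is preserved: for every y ∈ Y, dil(F,y) = dil(f,y), where dil(F,y) = sup_{x ∈ X, x≠y} d(F(y),F(x))/d(y,x). -/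
open scoped ENNReal NNReal

set_option maxHeartbeats 1000000 in
set_option synthInstance.maxHeartbeats 400000 in
/-- The McShane-Gromov extension `F_x(v) = inf_{y ∈ Y}(f_y(v) + dil(f,y)·d(x,y))` of a
Lipschitz map `f : Y → L^∞(V)` preserves the pointwise dilatation: `dil(F, y) = dil(f, y)`
for every `y ∈ Y`. -/
theorem stmt_2 {X V : Type*} [MetricSpace X] (Y : Set X) (hY : Y.Nonempty)
    (f : Y → lp (fun _ : V => ℝ) ∞) (L : ℝ≥0) (hf : LipschitzWith L f) :
    ∃ F : X → lp (fun _ : V => ℝ) ∞,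
      (∀ (x : X) (v : V), (F x : ∀ _ : V, ℝ) v
          = ⨅ y : Y, ((f y : ∀ _ : V, ℝ) v + ptDil f y * dist x (y : X))) ∧
      (∀ y : Y, ptDil F (y : X) = ptDil f y) := by
  classical
  haveI : Nonempty Y := hY.to_subtype
  set D : Y → ℝ := fun y => ptDil f y with hDdef
  have hD0 : ∀ y : Y, 0 ≤ D y := by
    intro y
    apply Real.sSup_nonneg
    rintro r ⟨y', hy', rfl⟩
    positivity
  have hDle : ∀ y y' : Y, dist (f y) (f y') ≤ D y * dist (y : X) (y' : X) := by
    intro y y'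
    rcases eq_or_ne y' y with rfl | hne
    · simp
    · have hpos : 0 < dist (y : X) (y' : X) := by
        rw [← Subtype.dist_eq]
        exact dist_pos.2 (Ne.symm hne)
      have hbdd : BddAbove {r : ℝ | ∃ a' : Y, a' ≠ y ∧ r = dist (f y) (f a') / dist y a'} := by
        refine ⟨(L : ℝ), ?_⟩
        rintro r ⟨a', ha', rfl⟩
        have hpos' : 0 < dist y a' := dist_pos.2 (Ne.symm ha')
        rw [div_le_iff₀ hpos']
        exact hf.dist_le_mul y a'
      have hmem : dist (f y) (f y') / dist y y' ∈
          {r : ℝ | ∃ a' : Y, a' ≠ y ∧ r = dist (f y) (f a') / dist y a'} := ⟨y', hne, rfl⟩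
      have := le_csSup hbdd hmem
      have hd : dist y y' = dist (y : X) (y' : X) := Subtype.dist_eq y y'
      rw [div_le_iff₀ (hd ▸ hpos)] at this
      calc dist (f y) (f y') ≤ D y * dist y y' := this
        _ = D y * dist (y : X) (y' : X) := by rw [hd]
  have hcoord : ∀ (a b : lp (fun _ : V => ℝ) ∞) (v : V),
      |(a : ∀ _ : V, ℝ) v - (b : ∀ _ : V, ℝ) v| ≤ dist a b := by
    intro a b v
    rw [dist_eq_norm]
    have h := lp.norm_apply_le_norm ENNReal.top_ne_zero (a - b) v
    simpa [lp.coeFn_sub, Real.norm_eq_abs] using h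
  -- key inequality
  have key : ∀ (y y' : Y) (x : X) (v : V),
      (f y : ∀ _ : V, ℝ) v ≤ ((f y' : ∀ _ : V, ℝ) v + D y' * dist x (y' : X)) + D y * dist x (y : X) := by
    intro y y' x v
    have h1 : (f y : ∀ _ : V, ℝ) v - (f y' : ∀ _ : V, ℝ) v ≤ dist (f y) (f y') :=
      (abs_le.1 (hcoord (f y) (f y') v)).2
    have h2 := hDle y y'
    have h3 : dist (f y) (f y') ≤ D y' * dist (y : X) (y' : X) := by
      rw [dist_comm (y:X) (y':X), dist_comm (f y) (f y')]; exact hDle y' y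
    rw [dist_comm x (y' : X), dist_comm x (y : X)]
    have htri : dist (y : X) (y' : X) ≤ dist (y : X) x + dist (y' : X) x := dist_triangle_right _ _ _
    have hnn1 : (0:ℝ) ≤ dist (y' : X) x := dist_nonneg
    have hnn2 : (0:ℝ) ≤ dist (y : X) x := dist_nonneg
    rcases le_total (D y) (D y') with h | h
    · have i1 := mul_le_mul_of_nonneg_left htri (hD0 y)
      have i2 := mul_le_mul_of_nonneg_right h hnn1
      nlinarith [i1, i2]
    · have i1 := mul_le_mul_of_nonneg_left htri (hD0 y')
      have i2 := mul_le_mul_of_nonneg_right h hnn2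
      nlinarith [i1, i2]
  set g : X → V → ℝ := fun x v => ⨅ y : Y, ((f y : ∀ _ : V, ℝ) v + D y * dist x (y : X)) with hg
  obtain ⟨y0, hy0⟩ := hY
  set y₀ : Y := ⟨y0, hy0⟩
  have hbdd : ∀ (x : X) (v : V),
      BddBelow (Set.range fun y : Y => (f y : ∀ _ : V, ℝ) v + D y * dist x (y : X)) := by
    intro x v
    refine ⟨(f y₀ : ∀ _ : V, ℝ) v - D y₀ * dist x (y₀ : X), ?_⟩
    rintro r ⟨y', rfl⟩
    have := key y₀ y' x v
    dsimp only
    linarith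
  have hgle : ∀ (x : X) (v : V) (y : Y), g x v ≤ (f y : ∀ _ : V, ℝ) v + D y * dist x (y : X) :=
    fun x v y => ciInf_le (hbdd x v) y
  have hgge : ∀ (x : X) (v : V) (y : Y), (f y : ∀ _ : V, ℝ) v - D y * dist x (y : X) ≤ g x v := by
    intro x v y
    refine le_ciInf fun y' => ?_
    have := key y y' x v
    linarith
  have hgY : ∀ (y : Y) (v : V), g (y : X) v = (f y : ∀ _ : V, ℝ) v := by
    intro y v
    refine le_antisymm ?_ ?_
    · have := hgle (y : X) v y; simpa using this
    · have := hgge (y : X) v y; simpa using this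
  have hmem : ∀ x : X, Memℓp (g x) ∞ := by
    intro x
    apply memℓp_infty
    refine ⟨‖f y₀‖ + D y₀ * dist x (y₀ : X), ?_⟩
    rintro r ⟨v, rfl⟩
    show ‖g x v‖ ≤ _
    have h1 := hgle x v y₀
    have h2 := hgge x v y₀
    have h3 : |(f y₀ : ∀ _ : V, ℝ) v| ≤ ‖f y₀‖ := by
      have := lp.norm_apply_le_norm ENNReal.top_ne_zero (f y₀) v
      simpa [Real.norm_eq_abs] using this
    have h4 := abs_le.1 h3
    rw [Real.norm_eq_abs, abs_le]
    constructor <;> [linarith; linarith]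
  refine ⟨fun x => ⟨g x, hmem x⟩, fun x v => rfl, ?_⟩
  set F : X → lp (fun _ : V => ℝ) ∞ := fun x => ⟨g x, hmem x⟩ with hF
  intro y
  have hFeq : ∀ y' : Y, F (y' : X) = f y' := by
    intro y'
    apply Subtype.ext
    funext v
    exact hgY y' v
  have hFdist : ∀ x : X, dist (F (y : X)) (F x) ≤ D y * dist (y : X) x := by
    intro x
    rw [dist_eq_norm]
    refine lp.norm_le_of_forall_le (mul_nonneg (hD0 y) dist_nonneg) fun v => ?_
    have hcoe : ((F (y:X) - F x : lp (fun _ : V => ℝ) ∞) : ∀ _ : V, ℝ) v = g (y:X) v - g x v := by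
      simp [lp.coeFn_sub, hF]; rfl
    rw [Real.norm_eq_abs, hcoe, hgY y v, abs_le, dist_comm (y:X) x]
    constructor
    · have := hgle x v y; linarith
    · have := hgge x v y; linarith
  have hFbdd : BddAbove {r : ℝ | ∃ a' : X, a' ≠ (y : X) ∧ r = dist (F (y:X)) (F a') / dist (y:X) a'} := by
    refine ⟨D y, ?_⟩
    rintro r ⟨x, hx, rfl⟩
    have hpos : 0 < dist (y : X) x := dist_pos.2 (Ne.symm hx)
    rw [div_le_iff₀ hpos]
    exact hFdist x
  refine le_antisymm ?_ ?_
  · apply Real.sSup_le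
    · rintro r ⟨x, hx, rfl⟩
      have hpos : 0 < dist (y : X) x := dist_pos.2 (Ne.symm hx)
      rw [div_le_iff₀ hpos]
      exact hFdist x
    · exact hD0 y
  · apply Real.sSup_le
    · rintro r ⟨y', hy', rfl⟩
      have hmem2 : dist (f y) (f y') / dist y y' ∈
          {r : ℝ | ∃ a' : X, a' ≠ (y : X) ∧ r = dist (F (y:X)) (F a') / dist (y:X) a'} := by
        refine ⟨(y' : X), fun h => hy' (Subtype.ext h), ?_⟩
        rw [hFeq y, hFeq y', Subtype.dist_eq]
      exact le_csSup hFbdd hmem2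
    · apply Real.sSup_nonneg
      rintro r ⟨x, hx, rfl⟩
      positivity
end

section
/- Let Y be a nonempty subset of a metric space X and f : Y → L^∞(V) a Lipschitz map. For the extension F_x(v) = inf_{y∈Y}(f_y(v) + dil(f,y)·d(x,y)) and any x ∈ X, y ∈ Y, one has ‖F(y) − F(x)‖_∞ ≤ dil(f,y)·d(x,y). -/
open scoped ENNReal NNReal

/-- For the McShane-Gromov extension `F` of a Lipschitz map `f : Y → L^∞(V)` and any
`x ∈ X`, `y ∈ Y`, one has `‖F(y) − F(x)‖_∞ ≤ dil(f,y)·d(x,y)`. -/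
theorem stmt_4 {X V : Type*} [MetricSpace X] (Y : Set X) (hY : Y.Nonempty)
    (f : Y → lp (fun _ : V => ℝ) ∞) (L : ℝ≥0) (hf : LipschitzWith L f) :
    ∃ F : X → lp (fun _ : V => ℝ) ∞,
      (∀ (x : X) (v : V), (F x : ∀ _ : V, ℝ) v
          = ⨅ y : Y, ((f y : ∀ _ : V, ℝ) v + ptDil f y * dist x (y : X))) ∧
      (∀ (x : X) (y : Y), dist (F (y : X)) (F x) ≤ ptDil f y * dist x (y : X)) := by
  haveI : Nonempty Y := hY.to_subtype
  set D : Y → ℝ := fun y => ptDil f y with hD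
  have hmemL : ∀ y : Y, ∀ r ∈ {r : ℝ | ∃ a' : Y, a' ≠ y ∧ r = dist (f y) (f a') / dist y a'},
      r ≤ (L : ℝ) := by
    rintro y r ⟨a', ha', rfl⟩
    have hd : (0:ℝ) < dist y a' := dist_pos.2 (fun h => ha' h.symm)
    rw [div_le_iff₀ hd]
    calc dist (f y) (f a') ≤ L * dist y a' := hf.dist_le_mul y a'
      _ = L * dist y a' := rfl
  have hDL : ∀ y : Y, D y ≤ (L : ℝ) := fun y =>
    Real.sSup_le (hmemL y) L.coe_nonneg
  have hD0 : ∀ y : Y, 0 ≤ D y := by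
    intro y
    apply Real.sSup_nonneg
    rintro r ⟨a', ha', rfl⟩
    positivity
  have key : ∀ y y' : Y, dist (f y) (f y') ≤ D y * dist (y : X) (y' : X) := by
    intro y y'
    rcases eq_or_ne y' y with rfl | hne
    · simp
    · have hd : (0:ℝ) < dist y y' := dist_pos.2 fun h => hne h.symm
      have hmem : dist (f y) (f y') / dist y y' ∈
          {r : ℝ | ∃ a' : Y, a' ≠ y ∧ r = dist (f y) (f a') / dist y a'} := ⟨y', hne, rfl⟩
      have hb : BddAbove {r : ℝ | ∃ a' : Y, a' ≠ y ∧ r = dist (f y) (f a') / dist y a'} :=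
        ⟨L, hmemL y⟩
      have := le_csSup hb hmem
      rw [div_le_iff₀ hd] at this
      calc dist (f y) (f y') ≤ D y * dist y y' := this
        _ = D y * dist (y : X) (y' : X) := by rw [Subtype.dist_eq]
  -- pointwise bounds between values of f
  have hpt : ∀ (y y' : Y) (v : V),
      (f y : ∀ _ : V, ℝ) v - (f y' : ∀ _ : V, ℝ) v ≤ dist (f y) (f y') := by
    intro y y' v
    have h1 : ‖(f y - f y') v‖ ≤ ‖f y - f y'‖ :=
      lp.norm_apply_le_norm ENNReal.top_ne_zero (f y - f y') v
    calc (f y : ∀ _ : V, ℝ) v - (f y' : ∀ _ : V, ℝ) v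
        ≤ |(f y : ∀ _ : V, ℝ) v - (f y' : ∀ _ : V, ℝ) v| := le_abs_self _
      _ = ‖(f y - f y') v‖ := by
          rw [Real.norm_eq_abs]; simp [lp.coeFn_sub]
      _ ≤ ‖f y - f y'‖ := h1
      _ = dist (f y) (f y') := (dist_eq_norm _ _).symm
  set g : X → V → ℝ := fun x v => ⨅ y : Y, ((f y : ∀ _ : V, ℝ) v + D y * dist x (y : X))
      with hg
  obtain ⟨y₀x, hy₀⟩ := hY
  set y₀ : Y := ⟨y₀x, hy₀⟩
  -- lower bound on terms
  have hlow : ∀ (x : X) (v : V) (y : Y),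
      (f y₀ : ∀ _ : V, ℝ) v - (L : ℝ) * dist x (y₀ : X)
        ≤ (f y : ∀ _ : V, ℝ) v + D y * dist x (y : X) := by
    intro x v y
    have h1 : (f y₀ : ∀ _ : V, ℝ) v - (f y : ∀ _ : V, ℝ) v ≤ D y * dist (y : X) (y₀ : X) := by
      calc (f y₀ : ∀ _ : V, ℝ) v - (f y : ∀ _ : V, ℝ) v ≤ dist (f y₀) (f y) := hpt _ _ _
        _ = dist (f y) (f y₀) := dist_comm _ _
        _ ≤ D y * dist (y : X) (y₀ : X) := key y y₀
    have h2 : D y * dist (y : X) (y₀ : X) ≤ D y * dist x (y : X) + D y * dist x (y₀ : X) := by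
      rw [← mul_add]
      exact mul_le_mul_of_nonneg_left
        ((dist_triangle (y : X) x (y₀ : X)).trans_eq (by rw [dist_comm (y:X) x])) (hD0 y)
    have h3 : D y * dist x (y₀ : X) ≤ (L : ℝ) * dist x (y₀ : X) :=
      mul_le_mul_of_nonneg_right (hDL y) dist_nonneg
    linarith
  have hbdd : ∀ (x : X) (v : V),
      BddBelow (Set.range fun y : Y => (f y : ∀ _ : V, ℝ) v + D y * dist x (y : X)) := by
    intro x v
    exact ⟨_, by rintro r ⟨y, rfl⟩; exact hlow x v y⟩
  -- g bounds
  have hgle : ∀ (x : X) (v : V) (y : Y),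
      g x v ≤ (f y : ∀ _ : V, ℝ) v + D y * dist x (y : X) := by
    intro x v y
    exact ciInf_le (hbdd x v) y
  have hgge : ∀ (x : X) (v : V),
      (f y₀ : ∀ _ : V, ℝ) v - (L : ℝ) * dist x (y₀ : X) ≤ g x v :=
    fun x v => le_ciInf (hlow x v)
  -- membership in lp ∞
  have hmem : ∀ x : X, Memℓp (g x) ∞ := by
    intro x
    apply memℓp_infty
    refine ⟨‖f y₀‖ + (L : ℝ) * dist x (y₀ : X), ?_⟩
    rintro r ⟨v, rfl⟩
    show ‖g x v‖ ≤ _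
    rw [Real.norm_eq_abs, abs_le]
    have hv : |((f y₀ : ∀ _ : V, ℝ) v)| ≤ ‖f y₀‖ := by
      rw [← Real.norm_eq_abs]; exact lp.norm_apply_le_norm ENNReal.top_ne_zero (f y₀) v
    have habs := abs_le.1 hv
    constructor
    · have := hgge x v; linarith
    · have := hgle x v y₀
      have h3 : D y₀ * dist x (y₀ : X) ≤ (L : ℝ) * dist x (y₀ : X) :=
        mul_le_mul_of_nonneg_right (hDL y₀) dist_nonneg
      linarith
  refine ⟨fun x => ⟨g x, hmem x⟩, fun x v => rfl, ?_⟩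
  intro x y
  -- g extends f on Y
  have hext : ∀ (y : Y) (v : V), g (y : X) v = (f y : ∀ _ : V, ℝ) v := by
    intro y v
    apply le_antisymm
    · have := hgle (y : X) v y
      simpa using this
    · apply le_ciInf
      intro y'
      have h1 : (f y : ∀ _ : V, ℝ) v - (f y' : ∀ _ : V, ℝ) v ≤ D y' * dist (y : X) (y' : X) := by
        calc (f y : ∀ _ : V, ℝ) v - (f y' : ∀ _ : V, ℝ) v ≤ dist (f y) (f y') := hpt _ _ _
          _ = dist (f y') (f y) := dist_comm _ _
          _ ≤ D y' * dist (y' : X) (y : X) := key y' y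
          _ = D y' * dist (y : X) (y' : X) := by rw [dist_comm]
      linarith
  -- main pointwise estimate
  have hmain : ∀ v : V, |g (y : X) v - g x v| ≤ D y * dist x (y : X) := by
    intro v
    rw [hext y v, abs_le]
    constructor
    · -- g x v ≤ f y v + D y * d
      have := hgle x v y
      linarith
    · -- f y v - D y * d ≤ g x v
      have : (f y : ∀ _ : V, ℝ) v - D y * dist x (y : X) ≤ g x v := by
        apply le_ciInf
        intro y'
        have hmin : (f y : ∀ _ : V, ℝ) v - (f y' : ∀ _ : V, ℝ) v
            ≤ min (D y) (D y') * dist (y : X) (y' : X) := by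
          rcases le_total (D y) (D y') with h | h
          · rw [min_eq_left h]; exact (hpt y y' v).trans (key y y')
          · rw [min_eq_right h]
            refine (hpt y y' v).trans ?_
            calc dist (f y) (f y') = dist (f y') (f y) := dist_comm _ _
              _ ≤ D y' * dist (y' : X) (y : X) := key y' y
              _ = D y' * dist (y : X) (y' : X) := by rw [dist_comm]
        have htri : min (D y) (D y') * dist (y : X) (y' : X)
            ≤ D y * dist x (y : X) + D y' * dist x (y' : X) := by
          have hm0 : 0 ≤ min (D y) (D y') := le_min (hD0 y) (hD0 y')
          calc min (D y) (D y') * dist (y : X) (y' : X)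
              ≤ min (D y) (D y') * (dist x (y : X) + dist x (y' : X)) := by
                apply mul_le_mul_of_nonneg_left _ hm0
                calc dist (y : X) (y' : X) ≤ dist (y : X) x + dist x (y' : X) :=
                      dist_triangle _ _ _
                  _ = dist x (y : X) + dist x (y' : X) := by rw [dist_comm (y:X) x]
            _ = min (D y) (D y') * dist x (y : X) + min (D y) (D y') * dist x (y' : X) := by ring
            _ ≤ D y * dist x (y : X) + D y' * dist x (y' : X) := by
                gcongr
                · exact min_le_left _ _
                · exact min_le_right _ _
        linarith
      linarith
  -- conclude with lp norm
  rw [dist_eq_norm]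
  apply lp.norm_le_of_forall_le (mul_nonneg (hD0 y) dist_nonneg)
  intro v
  rw [Real.norm_eq_abs]
  have : ((⟨g (y : X), hmem _⟩ - ⟨g x, hmem x⟩ : lp (fun _ : V => ℝ) ∞) : ∀ _ : V, ℝ) v
      = g (y : X) v - g x v := by simp [lp.coeFn_sub]; rfl
  rw [this]
  exact hmain v
end
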